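/- arXiv:2309.11007 — 2 statements merged into one kernel-verified Lean document; each statement's English description precedes it below -/
import Mathlib

section
/- Let X ~ Poisson(λ), δ ≥ 1/√λ, and suppose λδ³ = o(1) as λ → ∞. Then (1 − o(1)) c · e^{−λδ²/2}/(δ√λ) ≤ P(X ≥ λ(1+δ)) ≤ (1 + o(1)) · e^{−λδ²/2}/(δ√λ), where c is the universal constant from the sharp Poisson tail lower bound. -/
open Filter

/-- The probability that a Poisson(μ) random variable equals `k`. -/
noncomputable def poissonProb (μ : ℝ) (k : ℕ) : ℝ :=
  Real.exp (-μ) * μ ^ k / (Nat.factorial k : ℝ)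

/-- The upper tail `P(X ≥ x)` of a Poisson(μ) random variable. -/
noncomputable def poissonTail (μ : ℝ) (x : ℝ) : ℝ :=
  ∑' k : ℕ, if x ≤ (k : ℝ) then poissonProb μ k else 0

section Aux

open Real

lemma abs_log_quad {x : ℝ} (hx0 : 0 ≤ x) (hx : x ≤ 1/2) :
    |Real.log (1+x) - (x - x^2/2)| ≤ 2*x^3 := by
  have h := Real.abs_log_sub_add_sum_range_le (x := -x) (by rw [abs_neg, abs_of_nonneg hx0]; linarith) 2
  rw [abs_neg, abs_of_nonneg hx0, Finset.sum_range_succ, Finset.sum_range_one] at h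
  push_cast at h
  have e1 : (-x) ^ (0+1)/(0+1) + (-x)^(1+1)/(1+1) + Real.log (1 - -x)
      = Real.log (1+x) - (x - x^2/2) := by
    rw [show (1:ℝ) - -x = 1 + x by ring]; ring
  rw [e1] at h
  refine h.trans ?_
  rw [div_le_iff₀ (by linarith)]
  nlinarith [pow_nonneg hx0 3]

lemma abs_h {x : ℝ} (hx0 : 0 ≤ x) (hx : x ≤ 1/2) :
    |(1+x) * Real.log (1+x) - x - x^2/2| ≤ 4*x^3 := by
  have h := abs_log_quad hx0 hx
  have key : (1+x) * Real.log (1+x) - x - x^2/2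
      = (1+x) * (Real.log (1+x) - (x - x^2/2)) + (-(x^3/2)) := by ring
  rw [key]
  have h3 : (0:ℝ) ≤ x^3 := pow_nonneg hx0 3
  calc |(1+x) * (Real.log (1+x) - (x - x^2/2)) + (-(x^3/2))|
      ≤ |(1+x) * (Real.log (1+x) - (x - x^2/2))| + |(-(x^3/2))| := abs_add_le _ _
    _ ≤ (1+x) * (2*x^3) + x^3/2 := by
        rw [abs_mul, abs_of_nonneg (by linarith : (0:ℝ) ≤ 1+x), abs_neg,
          abs_of_nonneg (by linarith : (0:ℝ) ≤ x^3/2)]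
        gcongr
    _ ≤ 4*x^3 := by nlinarith

lemma stirling_lower (n : ℕ) (hn : 1 ≤ n) :
    Real.sqrt π * (Real.sqrt (2*n) * ((n:ℝ) / Real.exp 1)^n) ≤ (Nat.factorial n : ℝ) := by
  have h1 : Real.sqrt π ≤ Stirling.stirlingSeq n := by
    obtain ⟨k, rfl⟩ := Nat.exists_eq_add_of_le hn
    have := Stirling.stirlingSeq'_antitone.le_of_tendsto
      (Stirling.tendsto_stirlingSeq_sqrt_pi.comp (tendsto_add_atTop_nat 1)) k
    simpa [Function.comp, Nat.add_comm] using this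
  have hpos : (0:ℝ) < Real.sqrt (2*n) * ((n:ℝ) / Real.exp 1)^n := by
    have : (0:ℝ) < n := by exact_mod_cast hn
    positivity
  rw [Stirling.stirlingSeq] at h1
  calc Real.sqrt π * (Real.sqrt (2*n) * ((n:ℝ) / Real.exp 1)^n)
      ≤ ((Nat.factorial n : ℝ) / (Real.sqrt (2*n) * ((n:ℝ) / Real.exp 1)^n))
          * (Real.sqrt (2*n) * ((n:ℝ) / Real.exp 1)^n) := by
        gcongr
    _ = (Nat.factorial n : ℝ) := div_mul_cancel₀ _ (ne_of_gt hpos)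

lemma stirling_upper (n : ℕ) (hn : 1 ≤ n) :
    (Nat.factorial n : ℝ) ≤ Real.exp 1 * Real.sqrt n * ((n:ℝ) / Real.exp 1)^n := by
  have h1 : Stirling.stirlingSeq n ≤ Real.exp 1 / Real.sqrt 2 := by
    rw [← Stirling.stirlingSeq_one]
    obtain ⟨k, rfl⟩ := Nat.exists_eq_add_of_le hn
    have := Stirling.stirlingSeq'_antitone (Nat.zero_le k)
    simpa [Function.comp, Nat.add_comm] using this
  have hpos : (0:ℝ) < Real.sqrt (2*n) * ((n:ℝ) / Real.exp 1)^n := by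
    have : (0:ℝ) < n := by exact_mod_cast hn
    positivity
  rw [Stirling.stirlingSeq] at h1
  calc (Nat.factorial n : ℝ)
      = ((Nat.factorial n : ℝ) / (Real.sqrt (2*n) * ((n:ℝ) / Real.exp 1)^n))
          * (Real.sqrt (2*n) * ((n:ℝ) / Real.exp 1)^n) :=
        (div_mul_cancel₀ _ (ne_of_gt hpos)).symm
    _ ≤ (Real.exp 1 / Real.sqrt 2) * (Real.sqrt (2*n) * ((n:ℝ) / Real.exp 1)^n) := by gcongr
    _ = Real.exp 1 * Real.sqrt n * ((n:ℝ) / Real.exp 1)^n := by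
        rw [show (2:ℝ)*n = 2*(n:ℝ) by ring, Real.sqrt_mul (by norm_num : (0:ℝ) ≤ 2)]
        field_simp

lemma pois_nonneg {μ : ℝ} (hμ : 0 ≤ μ) (k : ℕ) : 0 ≤ poissonProb μ k := by
  unfold poissonProb; positivity

lemma pois_summable (μ : ℝ) : Summable (poissonProb μ) := by
  have : poissonProb μ = fun k => Real.exp (-μ) * (μ^k / (Nat.factorial k : ℝ)) := by
    funext k; rw [poissonProb, mul_div_assoc]
  rw [this]
  exact (Real.summable_pow_div_factorial μ).mul_left _

lemma tail_eq (μ x : ℝ) (hμ : 0 ≤ μ) :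
    poissonTail μ x = ∑' k : ℕ, poissonProb μ (⌈x⌉₊ + k) := by
  set m := ⌈x⌉₊ with hm
  have hg : ∀ k : ℕ, (if x ≤ (k:ℝ) then poissonProb μ k else 0)
      = if m ≤ k then poissonProb μ k else 0 := by
    intro k; simp only [hm, Nat.ceil_le]
  rw [poissonTail]
  simp_rw [hg]
  have hs : Summable (fun k => if m ≤ k then poissonProb μ k else 0) := by
    apply Summable.of_nonneg_of_le (fun k => ?_) (fun k => ?_) (pois_summable μ)
    · split <;> simp [pois_nonneg hμ]
    · split <;> simp [pois_nonneg hμ]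
  have key := Summable.sum_add_tsum_nat_add m hs
  have h0 : ∑ i ∈ Finset.range m, (if m ≤ i then poissonProb μ i else 0) = 0 := by
    apply Finset.sum_eq_zero
    intro i hi
    rw [if_neg (by rw [Finset.mem_range] at hi; omega)]
  rw [h0, zero_add] at key
  rw [← key]
  apply tsum_congr
  intro k
  rw [if_pos (by omega), Nat.add_comm]

lemma pois_ratio (μ : ℝ) (hμ : 0 ≤ μ) (n k : ℕ) :
    poissonProb μ (n+k) ≤ poissonProb μ n * (μ/(n+1))^k := by
  have hfac : (Nat.factorial n : ℝ) * ((n:ℝ)+1)^k ≤ (Nat.factorial (n+k) : ℝ) := by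
    exact_mod_cast Nat.cast_le.mpr (by exact_mod_cast Nat.factorial_mul_pow_le_factorial)
  have h1 : poissonProb μ (n+k)
      ≤ Real.exp (-μ) * μ^(n+k) / ((Nat.factorial n : ℝ) * ((n:ℝ)+1)^k) := by
    rw [poissonProb]
    apply div_le_div_of_nonneg_left (by positivity) (by positivity) hfac
  refine h1.trans_eq ?_
  rw [poissonProb, div_pow, pow_add]
  field_simp

lemma pois_succ (μ : ℝ) (n : ℕ) :
    poissonProb μ (n+1) = poissonProb μ n * (μ/((n:ℝ)+1)) := by
  rw [poissonProb, poissonProb, Nat.factorial_succ, pow_succ]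
  push_cast
  field_simp

lemma pois_anti (μ : ℝ) (hμ : 0 ≤ μ) (n : ℕ) (h : μ ≤ (n:ℝ)+1) (j : ℕ) :
    poissonProb μ (n+j) ≤ poissonProb μ n := by
  induction j with
  | zero => exact le_refl _
  | succ j ih =>
      rw [show n + (j+1) = (n+j) + 1 by ring, pois_succ]
      calc poissonProb μ (n+j) * (μ/((((n+j):ℕ):ℝ)+1)) ≤ poissonProb μ (n+j) * 1 := by
            apply mul_le_mul_of_nonneg_left _ (pois_nonneg hμ _)
            rw [div_le_one (by positivity)]
            push_cast; linarith [Nat.cast_nonneg (α := ℝ) j]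
        _ = poissonProb μ (n+j) := mul_one _
        _ ≤ _ := ih

lemma exp_ident (μ : ℝ) (hμ : 0 < μ) (n : ℕ) (hn : 1 ≤ n) :
    Real.exp ((n:ℝ) - μ + n * Real.log (μ/n))
      = Real.exp (-μ) * μ^n / ((n:ℝ)/Real.exp 1)^n := by
  have hn' : (0:ℝ) < n := by exact_mod_cast hn
  have h1 : Real.exp ((n:ℝ) * Real.log (μ/n)) = (μ/n)^n := by
    rw [Real.exp_nat_mul, Real.exp_log (by positivity)]
  have h2 : Real.exp ((n:ℝ) - μ + n * Real.log (μ/n))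
      = Real.exp (-μ) * ((μ/n)^n * Real.exp n) := by
    rw [← h1, ← Real.exp_add, ← Real.exp_add]
    congr 1; ring
  rw [h2, div_pow, div_pow, Real.exp_one_pow]
  have e1 : Real.exp 1 ^ n ≠ 0 := by positivity
  have e2 : (n:ℝ) ^ n ≠ 0 := by positivity
  field_simp

lemma point_upper (μ : ℝ) (hμ : 0 < μ) (n : ℕ) (hn : 1 ≤ n) :
    poissonProb μ n ≤ Real.exp ((n:ℝ) - μ + n * Real.log (μ / n))
      / (Real.sqrt π * Real.sqrt (2*n)) := by
  have hn' : (0:ℝ) < n := by exact_mod_cast hn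
  have hpos : (0:ℝ) < Real.sqrt π * (Real.sqrt (2*n) * ((n:ℝ)/Real.exp 1)^n) := by positivity
  rw [poissonProb]
  calc Real.exp (-μ) * μ^n / (Nat.factorial n : ℝ)
      ≤ Real.exp (-μ) * μ^n / (Real.sqrt π * (Real.sqrt (2*n) * ((n:ℝ)/Real.exp 1)^n)) :=
        div_le_div_of_nonneg_left (by positivity) hpos (stirling_lower n hn)
    _ = Real.exp ((n:ℝ) - μ + n * Real.log (μ / n)) / (Real.sqrt π * Real.sqrt (2*n)) := by
        rw [exp_ident μ hμ n hn, div_div]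
        congr 1
        ring

lemma point_lower (μ : ℝ) (hμ : 0 < μ) (n : ℕ) (hn : 1 ≤ n) :
    Real.exp ((n:ℝ) - μ + n * Real.log (μ / n)) / (Real.exp 1 * Real.sqrt n)
      ≤ poissonProb μ n := by
  have hn' : (0:ℝ) < n := by exact_mod_cast hn
  have hfac : (0:ℝ) < (Nat.factorial n : ℝ) := by exact_mod_cast Nat.factorial_pos n
  rw [poissonProb]
  calc Real.exp ((n:ℝ) - μ + n * Real.log (μ / n)) / (Real.exp 1 * Real.sqrt n)
      = Real.exp (-μ) * μ^n / (Real.exp 1 * Real.sqrt n * ((n:ℝ)/Real.exp 1)^n) := by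
        rw [exp_ident μ hμ n hn, div_div]
        congr 1
        ring
    _ ≤ Real.exp (-μ) * μ^n / (Nat.factorial n : ℝ) :=
        div_le_div_of_nonneg_left (by positivity) hfac (stirling_upper n hn)

/-- rewriting the exponent in terms of `h(t) = (1+t)log(1+t) - t`. -/
lemma exponent_eq (l : ℝ) (hl : 0 < l) (n : ℕ) (hn : (0:ℝ) < n) :
    (n:ℝ) - l + n * Real.log (l/n)
      = -(l * ((1 + ((n:ℝ)/l - 1)) * Real.log (1 + ((n:ℝ)/l - 1)) - ((n:ℝ)/l - 1))) := by
  have h1 : 1 + ((n:ℝ)/l - 1) = (n:ℝ)/l := by ring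
  rw [h1, Real.log_div (ne_of_gt hl) (ne_of_gt hn), Real.log_div (ne_of_gt hn) (ne_of_gt hl)]
  field_simp
  ring

end Aux

set_option maxHeartbeats 2000000 in
/-- Gaussian-type two-sided bounds on the Poisson tail in the moderate deviation regime:
if `δ = δ(λ) ≥ 1/√λ` and `λδ³ → 0` as `λ → ∞`, then there is a universal constant `c > 0`
(the constant from the sharp Poisson tail lower bound) such that
`(1−o(1))·c·e^{−λδ²/2}/(δ√λ) ≤ P(X ≥ λ(1+δ)) ≤ (1+o(1))·e^{−λδ²/2}/(δ√λ)`. -/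
theorem poisson_tail_moderate_deviation (δ : ℝ → ℝ)
    (hδ : ∀ᶠ lam in atTop, 1 / Real.sqrt lam ≤ δ lam)
    (hδ3 : Tendsto (fun lam => lam * (δ lam) ^ 3) atTop (nhds 0)) :
    ∃ c : ℝ, 0 < c ∧ ∃ e : ℝ → ℝ, Tendsto e atTop (nhds 0) ∧
      ∀ᶠ lam in atTop,
        (1 - e lam) * c * Real.exp (-(lam * (δ lam) ^ 2 / 2)) / (δ lam * Real.sqrt lam) ≤
          poissonTail lam (lam * (1 + δ lam)) ∧
        poissonTail lam (lam * (1 + δ lam)) ≤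
          (1 + e lam) * Real.exp (-(lam * (δ lam) ^ 2 / 2)) / (δ lam * Real.sqrt lam) := by
  refine ⟨Real.exp (-13), Real.exp_pos _, fun _ => 0, tendsto_const_nhds, ?_⟩
  have h3 : ∀ᶠ lam in atTop, lam * (δ lam)^3 ≤ 1/100 :=
    hδ3.eventually (eventually_le_nhds (by norm_num))
  filter_upwards [hδ, h3, eventually_ge_atTop (1000000:ℝ)] with l hd1 hd3 hl
  set d := δ l with hdd
  have hlpos : (0:ℝ) < l := by linarith
  have hslpos : 0 < Real.sqrt l := Real.sqrt_pos.mpr hlpos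
  have hd0 : 0 < d := lt_of_lt_of_le (one_div_pos.mpr hslpos) hd1
  have hsql : Real.sqrt l * Real.sqrt l = l := Real.mul_self_sqrt hlpos.le
  have hsl1 : 1 ≤ Real.sqrt l := by nlinarith
  have hsl_le : Real.sqrt l ≤ l := by nlinarith
  have hdsl : 1 ≤ d * Real.sqrt l := by
    have h := mul_le_mul_of_nonneg_right hd1 hslpos.le
    rwa [div_mul_cancel₀ _ (ne_of_gt hslpos)] at h
  have hd2 : 1 ≤ l * d^2 := by
    nlinarith [mul_le_mul hdsl hdsl (by norm_num) (le_trans (by norm_num) hdsl)]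
  have hdinv : 1/d ≤ Real.sqrt l := by
    rw [div_le_iff₀ hd0]; linarith [mul_comm d (Real.sqrt l)] ; 
  have hld1 : 1 ≤ d * l := by
    nlinarith [mul_nonneg hd0.le (sub_nonneg.mpr hsl_le)]
  have hd1l : 1/l ≤ d := by rw [div_le_iff₀ hlpos]; linarith
  have hldsl : Real.sqrt l ≤ l * d := by
    have e : l / Real.sqrt l = Real.sqrt l := by
      rw [div_eq_iff (ne_of_gt hslpos)]; exact hsql.symm
    have h' : l * (1/Real.sqrt l) ≤ l * d := mul_le_mul_of_nonneg_left hd1 hlpos.le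
    rw [mul_one_div, e] at h'
    linarith
  have hcube : d^3 ≤ 1/100000000 := by
    have h := mul_le_mul_of_nonneg_right hl (le_of_lt (pow_pos hd0 3))
    linarith
  have hdsmall : d ≤ 1/100 := by
    by_contra hcon
    push_neg at hcon
    have := pow_lt_pow_left₀ hcon (by norm_num : (0:ℝ) ≤ 1/100) (by norm_num : 3 ≠ 0)
    norm_num at this
    linarith
  set x := l * (1 + d) with hxd
  have hx : 0 < x := by rw [hxd]; nlinarith [hd0, hlpos]
  set m := ⌈x⌉₊ with hmdef
  have hm0 : 0 < m := Nat.ceil_pos.mpr hx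
  have hmx : x ≤ (m:ℝ) := Nat.le_ceil x
  have hmx1 : (m:ℝ) ≤ x + 1 := (Nat.ceil_lt_add_one hx.le).le
  have hlm : l ≤ (m:ℝ) := le_trans (by rw [hxd]; nlinarith [hd0, hlpos]) hmx
  have hmpos : (0:ℝ) < m := lt_of_lt_of_le hlpos hlm
  have hTsum : poissonTail l x = ∑' k, poissonProb l (m + k) := tail_eq l x hlpos.le
  clear_value m
  clear_value x
  clear_value d
  have hsum_u : Summable (fun k => poissonProb l (m+k)) := by
    have := (summable_nat_add_iff m).mpr (pois_summable l)
    simpa [Nat.add_comm] using this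
  constructor
  · -- LOWER BOUND
    set N := ⌈1/d⌉₊ with hNdef
    have hN : 1/d ≤ (N:ℝ) := Nat.le_ceil _
    have hN1 : (N:ℝ) ≤ 1/d + 1 := (Nat.ceil_lt_add_one (le_of_lt (one_div_pos.mpr hd0))).le
    clear_value N
    set m' := m + N with hm'def
    have hm'cast : ((m':ℕ):ℝ) = (m:ℝ) + (N:ℝ) := by rw [hm'def]; exact Nat.cast_add m N
    have hm'1 : 1 ≤ m' := by omega
    have hm'pos : (0:ℝ) < (m':ℝ) := by
      exact_mod_cast Nat.lt_of_lt_of_le Nat.zero_lt_one hm'1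
    clear_value m'
    have hTlow1 : (N:ℝ) * poissonProb l m' ≤ poissonTail l x := by
      rw [hTsum]
      have hle : ∀ k ∈ Finset.range N, poissonProb l m' ≤ poissonProb l (m+k) := by
        intro k hk
        rw [Finset.mem_range] at hk
        have hsplit : m' = (m+k) + (N-k) := by omega
        rw [hsplit]
        apply pois_anti l hlpos.le (m+k) _ (N-k)
        push_cast
        have : (0:ℝ) ≤ (k:ℝ) := Nat.cast_nonneg k
        linarith
      calc (N:ℝ) * poissonProb l m' = ∑ _k ∈ Finset.range N, poissonProb l m' := by
            rw [Finset.sum_const, Finset.card_range, nsmul_eq_mul]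
        _ ≤ ∑ k ∈ Finset.range N, poissonProb l (m+k) := Finset.sum_le_sum hle
        _ ≤ ∑' k, poissonProb l (m+k) :=
            Summable.sum_le_tsum _ (fun k _ => pois_nonneg hlpos.le _) hsum_u
    have hplow := point_lower l hlpos m' hm'1
    have hEeq := exponent_eq l hlpos m' hm'pos
    set t2 := ((m':ℕ):ℝ)/l - 1 with ht2def
    clear_value t2
    have ht20 : 0 ≤ t2 := by
      rw [ht2def, sub_nonneg, le_div_iff₀ hlpos, hm'cast]
      have : (0:ℝ) ≤ (N:ℝ) := Nat.cast_nonneg N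
      linarith
    have hone : 1 ≤ 1/d := by rw [le_div_iff₀ hd0]; linarith
    have ht2s : t2 ≤ d + 3/(l*d) := by
      rw [ht2def, sub_le_iff_le_add, div_le_iff₀ hlpos, hm'cast]
      have e3 : (d + 3/(l*d) + 1)*l = d*l + 3/d + l := by
        field_simp
      rw [e3]
      linarith [show (3:ℝ)/d = 3*(1/d) by ring]
    have ht24 : t2 ≤ 4*d := by
      rw [ht2def, sub_le_iff_le_add, div_le_iff₀ hlpos, hm'cast]
      linarith
    have ht2h : t2 ≤ 1/2 := le_trans ht24 (by linarith)
    set s := 3/(l*d) with hsdef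
    clear_value s
    have hs0 : 0 ≤ s := by rw [hsdef]; positivity
    have hls : l*d*s = 3 := by
      have h0 : l*d ≠ 0 := ne_of_gt (mul_pos hlpos hd0)
      rw [hsdef]
      field_simp
    have hs3 : s ≤ 3*d := by
      rw [hsdef, div_le_iff₀ (mul_pos hlpos hd0)]
      linarith [hd2, show 3*d*(l*d) = 3*(l*d^2) by ring]
    have hss : l*s^2 ≤ 9 := by
      linarith [mul_nonneg (mul_nonneg hlpos.le hs0) (sub_nonneg.mpr hs3), hls,
        show l*s*(3*d - s) = 3*(l*d*s) - 3*(l*d*s) + l*s*(3*d) - l*s^2 by ring]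
    have hA2 : l*t2^2 ≤ l*d^2 + 15 := by
      have hq := mul_le_mul ht2s ht2s ht20 (by linarith)
      have hq2 := mul_le_mul_of_nonneg_left hq hlpos.le
      linarith [hq2, hls, hss]
    have hhl2 : (1+t2)*Real.log (1+t2) - t2 ≤ t2^2/2 + 4*t2^3 := by
      have := (abs_le.mp (abs_h ht20 ht2h)).2
      linarith
    have h2 : l*t2^3 ≤ 64*(l*d^3) := by
      have := mul_le_mul_of_nonneg_left (pow_le_pow_left₀ ht20 ht24 3) hlpos.le
      linarith [this, show l*((4*d)^3) = 64*(l*d^3) by ring]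
    have hE2 : -(l*d^2/2) - 11 ≤ ((m':ℕ):ℝ) - l + m' * Real.log (l/m') := by
      rw [hEeq]
      have h1 : l*((1+t2)*Real.log (1+t2) - t2) ≤ l*(t2^2/2 + 4*t2^3) :=
        mul_le_mul_of_nonneg_left hhl2 hlpos.le
      linarith [hA2, hd3, h2, h1]
    have hexp2 : Real.exp (-(l*d^2/2)) * Real.exp (-11)
        ≤ Real.exp (((m':ℕ):ℝ) - l + m' * Real.log (l/m')) := by
      rw [← Real.exp_add]
      exact Real.exp_le_exp.mpr (by linarith)
    have hld_le : l*d ≤ l := by linarith [mul_le_mul_of_nonneg_left hdsmall hlpos.le]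
    have hm'4 : ((m':ℕ):ℝ) ≤ 4*l := by
      rw [hm'cast]
      linarith
    have hsqm' : Real.sqrt m' ≤ 2*Real.sqrt l := by
      calc Real.sqrt ((m':ℕ):ℝ) ≤ Real.sqrt (4*l) := Real.sqrt_le_sqrt hm'4
      _ = 2*Real.sqrt l := by
          rw [show (4:ℝ)*l = (2*Real.sqrt l)^2 by rw [mul_pow, Real.sq_sqrt hlpos.le]; ring,
            Real.sqrt_sq (by positivity)]
    have hsm'pos : 0 < Real.sqrt ((m':ℕ):ℝ) := Real.sqrt_pos.mpr hm'pos
    have hplow2 : Real.exp (-(l*d^2/2)) * Real.exp (-11) / (Real.exp 1 * (2*Real.sqrt l))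
        ≤ poissonProb l m' := by
      refine le_trans ?_ hplow
      apply div_le_div₀ (Real.exp_pos _).le hexp2
        (mul_pos (Real.exp_pos 1) hsm'pos)
      exact mul_le_mul_of_nonneg_left hsqm' (Real.exp_pos 1).le
    have step2 : (1/d)*(Real.exp (-(l*d^2/2)) * Real.exp (-11) / (Real.exp 1 * (2*Real.sqrt l)))
        ≤ (N:ℝ) * poissonProb l m' := by
      apply mul_le_mul hN hplow2 ?_ (Nat.cast_nonneg N)
      exact le_of_lt (div_pos (mul_pos (Real.exp_pos _) (Real.exp_pos _))
        (mul_pos (Real.exp_pos 1) (mul_pos two_pos hslpos)))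
    refine le_trans ?_ (le_trans step2 hTlow1)
    have hrw : (1/d)*(Real.exp (-(l*d^2/2)) * Real.exp (-11) / (Real.exp 1 * (2*Real.sqrt l)))
        = Real.exp (-(l*d^2/2)) * Real.exp (-11) / (d * (Real.exp 1 * (2*Real.sqrt l))) := by
      ring
    rw [hrw]
    have h2e : (2:ℝ) ≤ Real.exp 1 := by linarith [Real.add_one_le_exp 1]
    have hnum : Real.exp (-13) * (Real.exp 1 * 2) ≤ Real.exp (-11) := by
      calc Real.exp (-13) * (Real.exp 1 * 2) ≤ Real.exp (-13) * (Real.exp 1 * Real.exp 1) :=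
            mul_le_mul_of_nonneg_left
              (mul_le_mul_of_nonneg_left h2e (Real.exp_pos 1).le) (Real.exp_pos (-13)).le
        _ = Real.exp (-11) := by rw [← Real.exp_add, ← Real.exp_add]; norm_num
    rw [show (1 - (0:ℝ)) = 1 by norm_num, one_mul]
    rw [div_le_div_iff₀ (mul_pos hd0 hslpos)
      (mul_pos hd0 (mul_pos (Real.exp_pos 1) (by linarith : (0:ℝ) < 2*Real.sqrt l)))]
    linarith [mul_le_mul_of_nonneg_left hnum
      (by positivity : (0:ℝ) ≤ Real.exp (-(l*d^2/2)) * (d*Real.sqrt l))]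
  · -- UPPER BOUND
    set r := l / ((m:ℝ)+1) with hrdef
    clear_value r
    have hr0 : 0 ≤ r := by
      rw [hrdef]; positivity
    have hr1 : r ≤ 1/(1+d) := by
      rw [hrdef, div_le_div_iff₀ (by positivity) (by linarith : (0:ℝ) < 1+d)]
      linarith
    have hrlt : r < 1 := lt_of_le_of_lt hr1 (by rw [div_lt_one (by linarith)]; linarith)
    have hgeo : Summable (fun k:ℕ => poissonProb l m * r^k) :=
      (summable_geometric_of_lt_one hr0 hrlt).mul_left _
    have hT_up1 : poissonTail l x ≤ poissonProb l m * (1-r)⁻¹ := by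
      rw [hTsum]
      have hterm : ∀ k, poissonProb l (m+k) ≤ poissonProb l m * r^k := by
        intro k
        rw [hrdef]
        exact pois_ratio l hlpos.le m k
      calc ∑' k, poissonProb l (m+k) ≤ ∑' k, poissonProb l m * r^k :=
            Summable.tsum_le_tsum hterm hsum_u hgeo
        _ = poissonProb l m * ∑' k:ℕ, r^k := tsum_mul_left
        _ = poissonProb l m * (1-r)⁻¹ := by rw [tsum_geometric_of_lt_one hr0 hrlt]
    have hinv : (1-r)⁻¹ ≤ (1+d)/d := by
      have e : (1:ℝ) - 1/(1+d) = d/(1+d) := by field_simp; ring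
      have h1 : d/(1+d) ≤ 1 - r := by linarith
      calc (1-r)⁻¹ ≤ (d/(1+d))⁻¹ :=
            inv_anti₀ (div_pos hd0 (by linarith)) h1
        _ = (1+d)/d := by rw [inv_div]
    have hpm := point_upper l hlpos m hm0
    have hEeq := exponent_eq l hlpos m hmpos
    set t1 := ((m:ℕ):ℝ)/l - 1 with ht1def
    clear_value t1
    have ht1d : d ≤ t1 := by
      rw [ht1def, le_sub_iff_add_le, le_div_iff₀ hlpos]
      linarith
    have ht10 : 0 ≤ t1 := le_trans hd0.le ht1d
    have ht12 : t1 ≤ 2*d := by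
      rw [ht1def, sub_le_iff_le_add, div_le_iff₀ hlpos]
      linarith
    have ht1h : t1 ≤ 1/2 := by linarith
    have hhl1 : t1^2/2 - 4*t1^3 ≤ (1+t1)*Real.log (1+t1) - t1 := by
      have := (abs_le.mp (abs_h ht10 ht1h)).1
      linarith
    have hE1 : ((m:ℕ):ℝ) - l + m * Real.log (l/m) ≤ -(l*d^2/2) + 32/100 := by
      rw [hEeq]
      have h1 : l*(t1^2/2 - 4*t1^3) ≤ l*((1+t1)*Real.log (1+t1) - t1) :=
        mul_le_mul_of_nonneg_left hhl1 hlpos.le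
      have h2 : l*d^2 ≤ l*t1^2 :=
        mul_le_mul_of_nonneg_left (pow_le_pow_left₀ hd0.le ht1d 2) hlpos.le
      have h3 : l*t1^3 ≤ 8*(l*d^3) := by
        have := mul_le_mul_of_nonneg_left (pow_le_pow_left₀ ht10 ht12 3) hlpos.le
        linarith [this, show l*((2*d)^3) = 8*(l*d^3) by ring]
      linarith [hd3, h1, h2, h3]
    have hexp1 : Real.exp (((m:ℕ):ℝ) - l + m * Real.log (l/m))
        ≤ Real.exp (-(l*d^2/2)) * Real.exp (32/100) := by
      rw [← Real.exp_add]
      exact Real.exp_le_exp.mpr (by linarith)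
    have hexp14 : Real.exp (32/100) ≤ 1.4 := by
      have h13 : Real.exp (32/100) ^ (3:ℕ) < 2.744 := by
        rw [← Real.exp_nat_mul]
        calc Real.exp ((3:ℕ)*(32/100)) ≤ Real.exp 1 := Real.exp_le_exp.mpr (by norm_num)
          _ < 2.7182818286 := Real.exp_one_lt_d9
          _ < 2.744 := by norm_num
      by_contra hcon
      push_neg at hcon
      have := pow_lt_pow_left₀ hcon (by norm_num : (0:ℝ) ≤ 1.4) (by norm_num : 3 ≠ 0)
      norm_num at this h13
      linarith
    have hsqrt2 : (1.41:ℝ) ≤ Real.sqrt 2 := by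
      have h := Real.sqrt_le_sqrt (show (1.41:ℝ)^2 ≤ 2 by norm_num)
      rwa [Real.sqrt_sq (by norm_num)] at h
    have hsqrtpi : (1.73:ℝ) ≤ Real.sqrt Real.pi := by
      have h := Real.sqrt_le_sqrt (show (1.73:ℝ)^2 ≤ Real.pi by nlinarith [Real.pi_gt_three])
      rwa [Real.sqrt_sq (by norm_num)] at h
    have hspi0 : 0 < Real.sqrt Real.pi := lt_of_lt_of_le (by norm_num) hsqrtpi
    have hm2l : Real.sqrt 2 * Real.sqrt l ≤ Real.sqrt (2*(m:ℝ)) := by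
      rw [← Real.sqrt_mul (by norm_num : (0:ℝ) ≤ 2)]
      exact Real.sqrt_le_sqrt (by linarith)
    have hsq2m : 0 < Real.sqrt (2*(m:ℝ)) :=
      lt_of_lt_of_le (mul_pos (Real.sqrt_pos.mpr (by norm_num : (0:ℝ) < 2)) hslpos) hm2l
    have key : Real.exp (32/100) * (1+d) * Real.sqrt l
        ≤ Real.sqrt Real.pi * Real.sqrt (2*(m:ℝ)) := by
      have k1 : Real.exp (32/100) * (1+d) ≤ 1.4*(101/100) :=
        mul_le_mul hexp14 (by linarith) (by linarith) (by norm_num)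
      have k2 : (1.73:ℝ)*1.41 ≤ Real.sqrt Real.pi * Real.sqrt 2 :=
        mul_le_mul hsqrtpi hsqrt2 (by norm_num) (by linarith)
      have k3 : Real.exp (32/100) * (1+d) * Real.sqrt l ≤ (1.4*(101/100)) * Real.sqrt l :=
        mul_le_mul_of_nonneg_right k1 hslpos.le
      have k4 : ((1.73:ℝ)*1.41) * Real.sqrt l ≤ (Real.sqrt Real.pi * Real.sqrt 2) * Real.sqrt l :=
        mul_le_mul_of_nonneg_right k2 hslpos.le
      have k5 : Real.sqrt Real.pi * (Real.sqrt 2 * Real.sqrt l) ≤ Real.sqrt Real.pi * Real.sqrt (2*(m:ℝ)) :=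
        mul_le_mul_of_nonneg_left hm2l hspi0.le
      linarith [k3, k4, k5, hslpos.le]
    have hApos : (0:ℝ) < Real.exp (-(l*d^2/2)) := Real.exp_pos _
    have hPpos : 0 < Real.sqrt Real.pi * Real.sqrt (2*(m:ℝ)) := mul_pos hspi0 hsq2m
    have c1 : poissonTail l x
        ≤ (Real.exp (-(l*d^2/2)) * Real.exp (32/100) / (Real.sqrt Real.pi * Real.sqrt (2*(m:ℝ))))
            * ((1+d)/d) := by
      calc poissonTail l x ≤ poissonProb l m * (1-r)⁻¹ := hT_up1
        _ ≤ (Real.exp (((m:ℕ):ℝ) - l + m * Real.log (l/m))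
              / (Real.sqrt Real.pi * Real.sqrt (2*(m:ℝ)))) * ((1+d)/d) := by
            apply mul_le_mul hpm hinv (inv_nonneg.mpr (by linarith)) (by positivity)
        _ ≤ _ := by
            apply mul_le_mul_of_nonneg_right _ (by positivity : (0:ℝ) ≤ (1+d)/d)
            exact (div_le_div_iff_of_pos_right hPpos).mpr hexp1
    refine c1.trans ?_
    rw [show (1 + (0:ℝ)) = 1 by norm_num, one_mul]
    rw [div_mul_div_comm, div_le_div_iff₀ (mul_pos hPpos hd0) (mul_pos hd0 hslpos)]
    linarith [mul_le_mul_of_nonneg_left key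
      (by positivity : (0:ℝ) ≤ Real.exp (-(l*d^2/2)) * d)]
end

section
/- Let T be a finite tree rooted at x with adjacency matrix A, let λ be its largest eigenvalue with positive (Perron) eigenvector w, and suppose every non-root vertex y has number of children N_y ≤ M with M < λ² (e.g. M ≤ λ²/2). Then for every edge (u,v) with v a child of u, w(u) ≥ (1 − C·M/λ²)·λ·w(v) and w(u) ≤ λ·w(v), for an absolute constant C. -/
/-- In the graph `G` viewed as rooted at `x`, the children of `v`: neighbors of `v`
strictly farther from the root `x`. -/
noncomputable def rootedChildren {V : Type*} [Fintype V] [DecidableEq V] (G : SimpleGraph V)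
    [DecidableRel G.Adj] (x v : V) : Finset V :=
  (G.neighborFinset v).filter fun y => G.dist x v < G.dist x y

lemma tree_parent' {V : Type} [Fintype V] [DecidableEq V] {G : SimpleGraph V}
    (hT : G.IsTree) (x v : V) (hv : v ≠ x) :
    ∃ p, G.Adj v p ∧ G.dist x p < G.dist x v ∧
      ∀ y, G.Adj v y → G.dist x y ≤ G.dist x v → y = p := by
  classical
  have hconn := hT.isConnected
  obtain ⟨P, hP, hPlen⟩ := (hconn x v).exists_path_of_dist
  have hxv : x ≠ v := fun h => hv h.symm
  obtain ⟨p, hadj, q, hq⟩ := SimpleGraph.Walk.exists_eq_cons_of_ne hxv.symm P.reverse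
  have hPrev : P.reverse.IsPath := hP.reverse
  have hqpath : q.IsPath := by rw [hq] at hPrev; exact hPrev.of_cons
  have hqlen : q.length = G.dist x v - 1 := by
    have := congrArg SimpleGraph.Walk.length hq
    simp [SimpleGraph.Walk.length_reverse] at this
    omega
  have hdistpos : 0 < G.dist x v := hconn.pos_dist_of_ne hxv
  have hdp : G.dist x p < G.dist x v := by
    have h1 : G.dist x p ≤ q.length := by
      have := SimpleGraph.dist_le q.reverse
      simpa [SimpleGraph.Walk.length_reverse] using this
    omega
  refine ⟨p, hadj, hdp, ?_⟩
  intro y hvy hle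
  by_contra hne
  obtain ⟨S, hS, hSlen⟩ := (hconn x y).exists_path_of_dist
  have hvnot : v ∉ S.support := by
    intro hmem
    have hvy' : v ≠ y := hvy.ne
    have h1 : G.dist x v ≤ (S.takeUntil v hmem).length := SimpleGraph.dist_le _
    have h2 : 1 ≤ (S.dropUntil v hmem).length := by
      by_contra h
      push_neg at h
      have h0 : (S.dropUntil v hmem).length = 0 := by omega
      exact hvy' (SimpleGraph.Walk.eq_of_length_eq_zero h0)
    have h3 : (S.takeUntil v hmem).length + (S.dropUntil v hmem).length = S.length := by
      have := congrArg SimpleGraph.Walk.length (S.take_spec hmem)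
      simpa only [SimpleGraph.Walk.length_append] using this
    omega
  set S' : G.Walk x v := S.concat hvy.symm with hS'
  have hS'path : S'.IsPath := by
    rw [← SimpleGraph.Walk.isPath_reverse_iff]
    rw [hS', SimpleGraph.Walk.reverse_concat]
    rw [SimpleGraph.Walk.cons_isPath_iff]
    exact ⟨hS.reverse, by simpa [SimpleGraph.Walk.support_reverse] using hvnot⟩
  have hPeq : P = S' := by
    have := hT.IsAcyclic.path_unique ⟨P, hP⟩ ⟨S', hS'path⟩
    exact congrArg Subtype.val this
  have hsup : P.reverse.support = S'.reverse.support := by rw [hPeq]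
  rw [hq, hS', SimpleGraph.Walk.reverse_concat] at hsup
  simp only [SimpleGraph.Walk.support_cons] at hsup
  have : q.support = S.reverse.support := by
    have := congrArg List.tail hsup
    simpa using this
  have h1 : q.support = p :: q.support.tail := q.support_eq_cons
  have h2 : S.reverse.support = y :: S.reverse.support.tail := S.reverse.support_eq_cons
  rw [h1, h2] at this
  exact hne (List.head_eq_of_cons_eq this.symm)

lemma neighbor_decomp {V : Type} [Fintype V] [DecidableEq V] {G : SimpleGraph V}
    [DecidableRel G.Adj] (hT : G.IsTree) (x v p : V) (hadj : G.Adj v p)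
    (hdp : G.dist x p < G.dist x v)
    (huniq : ∀ y, G.Adj v y → G.dist x y ≤ G.dist x v → y = p) :
    G.neighborFinset v = insert p (rootedChildren G x v) ∧ p ∉ rootedChildren G x v := by
  classical
  constructor
  · ext y
    simp only [Finset.mem_insert, rootedChildren, Finset.mem_filter,
      SimpleGraph.mem_neighborFinset]
    constructor
    · intro hy
      by_cases hle : G.dist x y ≤ G.dist x v
      · exact Or.inl (huniq y hy hle)
      · exact Or.inr ⟨hy, by omega⟩
    · rintro (rfl | ⟨hy, _⟩)
      · exact hadj
      · exact hy
  · simp only [rootedChildren, Finset.mem_filter, SimpleGraph.mem_neighborFinset]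
    rintro ⟨-, h⟩
    omega


/-- Perron eigenvector decay along edges of a tree: if `λ > 0` is the largest eigenvalue of
a finite tree rooted at `x`, with strictly positive eigenvector `w`, and every non-root
vertex has at most `M ≤ λ²/2` children, then for every edge with `v` a child of `u`,
`(1 − C·M/λ²)·λ·w(v) ≤ w(u) ≤ λ·w(v)` for an absolute constant `C`. -/
theorem tree_perron_eigenvector_ratio :
    ∃ C : ℝ, 0 < C ∧
      ∀ (V : Type) [Fintype V] [DecidableEq V] (G : SimpleGraph V) [DecidableRel G.Adj]
        (x : V) (lam : ℝ) (w : V → ℝ) (M : ℝ),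
        G.IsTree → 0 < lam →
        IsGreatest (spectrum ℝ (G.adjMatrix ℝ)) lam →
        (G.adjMatrix ℝ).mulVec w = lam • w →
        (∀ v : V, 0 < w v) →
        (∀ v : V, v ≠ x → ((rootedChildren G x v).card : ℝ) ≤ M) →
        0 ≤ M → M ≤ lam ^ 2 / 2 →
        ∀ u v : V, v ∈ rootedChildren G x u →
          (1 - C * M / lam ^ 2) * lam * w v ≤ w u ∧ w u ≤ lam * w v := by
  classical
  refine ⟨4, by norm_num, ?_⟩
  intro V _ _ G _ x lam w M hT hlam _hgr heig hw hM hM0 _hM2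
  have hconn := hT.isConnected
  -- eigen equation pointwise
  have heq : ∀ v : V, lam * w v = ∑ y ∈ G.neighborFinset v, w y := by
    intro v
    have := congrFun heig v
    rw [SimpleGraph.adjMatrix_mulVec_apply] at this
    simpa [Pi.smul_apply] using this.symm
  -- membership unfolding
  have hmemc : ∀ u v : V, v ∈ rootedChildren G x u ↔ G.Adj u v ∧ G.dist x u < G.dist x v := by
    intro u v
    simp [rootedChildren, SimpleGraph.mem_neighborFinset]
  have hdistlt : ∀ v : V, G.dist x v < Fintype.card V := by
    intro v
    obtain ⟨P, hP, hPlen⟩ := (hconn x v).exists_path_of_dist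
    rw [← hPlen]; exact hP.length_lt
  -- vertex ≠ root when it is a child
  have hvne : ∀ u v : V, v ∈ rootedChildren G x u → v ≠ x := by
    intro u v hmem hvx
    subst hvx
    rw [hmemc] at hmem
    simp [SimpleGraph.dist_self] at hmem
  -- decomposition of eigen equation at a non-root vertex with known parent
  have hsplit : ∀ u v : V, v ∈ rootedChildren G x u →
      lam * w v = w u + ∑ c ∈ rootedChildren G x v, w c := by
    intro u v hmem
    have hvx := hvne u v hmem
    rw [hmemc] at hmem
    obtain ⟨p, hadj, hdp, huniq⟩ := tree_parent' hT x v hvx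
    have hup : u = p := huniq u hmem.1.symm (le_of_lt hmem.2)
    obtain ⟨hdec, hpnot⟩ := neighbor_decomp hT x v p hadj hdp huniq
    rw [heq v, hdec, Finset.sum_insert hpnot, hup]
  -- key decay lemma under M ≤ lam^2/4
  have key : M ≤ lam ^ 2 / 4 → ∀ (k : ℕ) (v u : V),
      Fintype.card V - G.dist x v ≤ k → v ∈ rootedChildren G x u →
      lam * w v ≤ 2 * w u := by
    intro hM4
    intro k
    induction k with
    | zero => intro v u hk _; have := hdistlt v; omega
    | succ k ih =>
      intro v u hk hmem
      have hvx := hvne u v hmem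
      have hsum : ∑ c ∈ rootedChildren G x v, w c ≤ (2 * M / lam) * w v := by
        have hbound : ∀ c ∈ rootedChildren G x v, w c ≤ (2 / lam) * w v := by
          intro c hc
          have hdc : G.dist x v < G.dist x c := ((hmemc v c).mp hc).2
          have hkc : Fintype.card V - G.dist x c ≤ k := by
            have h1 := hdistlt v
            have h2 := ((hmemc u v).mp hmem).2
            omega
          have := ih c v hkc hc
          rw [div_mul_eq_mul_div, le_div_iff₀ hlam]
          nlinarith [this]
        calc ∑ c ∈ rootedChildren G x v, w c
            ≤ ∑ _c ∈ rootedChildren G x v, (2 / lam) * w v :=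
              Finset.sum_le_sum hbound
          _ = ((rootedChildren G x v).card : ℝ) * ((2 / lam) * w v) := by
              rw [Finset.sum_const, nsmul_eq_mul]
          _ ≤ M * ((2 / lam) * w v) := by
              apply mul_le_mul_of_nonneg_right (hM v hvx)
              exact mul_nonneg (div_nonneg (by norm_num) hlam.le) (hw v).le
          _ = (2 * M / lam) * w v := by ring
      have hdecomp := hsplit u v hmem
      have hwv := hw v
      have hwu := hw u
      -- lam * w v ≤ w u + (2M/lam) w v ; with 2M/lam ≤ lam/2
      have hM' : 2 * M / lam ≤ lam / 2 := by
        rw [div_le_div_iff₀ hlam (by norm_num : (0:ℝ) < 2)]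
        nlinarith
      nlinarith [hdecomp, hsum]
  intro u v hmem
  have hdecomp := hsplit u v hmem
  have hwv := hw v
  have hwu := hw u
  constructor
  · by_cases hM4 : M ≤ lam ^ 2 / 4
    · have hsum : ∑ c ∈ rootedChildren G x v, w c ≤ (2 * M / lam) * w v := by
        have hbound : ∀ c ∈ rootedChildren G x v, w c ≤ (2 / lam) * w v := by
          intro c hc
          have := key hM4 (Fintype.card V - G.dist x c) c v le_rfl hc
          rw [div_mul_eq_mul_div, le_div_iff₀ hlam]
          nlinarith [this]
        calc ∑ c ∈ rootedChildren G x v, w c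
            ≤ ∑ _c ∈ rootedChildren G x v, (2 / lam) * w v :=
              Finset.sum_le_sum hbound
          _ = ((rootedChildren G x v).card : ℝ) * ((2 / lam) * w v) := by
              rw [Finset.sum_const, nsmul_eq_mul]
          _ ≤ M * ((2 / lam) * w v) := by
              apply mul_le_mul_of_nonneg_right (hM v (hvne u v hmem))
              exact mul_nonneg (div_nonneg (by norm_num) hlam.le) (hw v).le
          _ = (2 * M / lam) * w v := by ring
      have expand : (1 - 4 * M / lam ^ 2) * lam * w v
          = lam * w v - (4 * M / lam) * w v := by
        field_simp
      rw [expand]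
      have h2M : (2 * M / lam) * w v ≤ (4 * M / lam) * w v := by
        apply mul_le_mul_of_nonneg_right _ hwv.le
        rw [div_le_div_iff_of_pos_right hlam]
        nlinarith
      linarith [hdecomp, hsum]
    · have : (1 - 4 * M / lam ^ 2) < 0 := by
        push_neg at hM4
        rw [sub_neg]
        rw [lt_div_iff₀ (by positivity : (0:ℝ) < lam ^ 2)]
        nlinarith
      have : (1 - 4 * M / lam ^ 2) * lam * w v < 0 := by
        apply mul_neg_of_neg_of_pos _ hwv
        exact mul_neg_of_neg_of_pos this hlam
      linarith
  · have hnn : ∑ c ∈ rootedChildren G x v, w c ≥ 0 :=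
      Finset.sum_nonneg fun c _ => le_of_lt (hw c)
    linarith [hdecomp]
end
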